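/- With a = b = (1+x)/(1-x), g = 1/(1-x)^2, f = x/(1-x), the second-order correction a** = (1, -(1-x)/(1+x); -1/(1+x)^2, x/(1+x)) applied to (1+x)/(1-x) equals (1-x)/(1+x). Consequently, the element ((1+x)/(1-x), (1+x)/(1-x); 1/(1-x)^2, x/(1-x)) of the group of almost Riordan arrays of second order is a pseudo-involution: its inverse is ((1-x)/(1+x), (1-x)/(1+x); 1/(1+x)^2, x/(1+x)). -/

import Mathlib

open PowerSeries

/-- Composition f ∘ g of formal power series (intended for g with zero constant term). -/
noncomputable def comp (f g : ℚ⟦X⟧) : ℚ⟦X⟧ :=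
  PowerSeries.mk fun n => ∑ k ∈ Finset.range (n + 1),
    PowerSeries.coeff k f * PowerSeries.coeff n (g ^ k)

/-- (f(x) - f(0))/x. -/
noncomputable def shift (f : ℚ⟦X⟧) : ℚ⟦X⟧ := PowerSeries.mk fun n => PowerSeries.coeff (n + 1) f

/-- Action of the almost Riordan array (a; g, f) on a power series b. -/
noncomputable def aact (a g f b : ℚ⟦X⟧) : ℚ⟦X⟧ :=
  PowerSeries.C (PowerSeries.constantCoeff b) * a + PowerSeries.X * g * comp (shift b) f

/-- Product in the group of almost Riordan arrays of order 1 (triples (a; g, f)). -/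
noncomputable def amul (M N : ℚ⟦X⟧ × ℚ⟦X⟧ × ℚ⟦X⟧) : ℚ⟦X⟧ × ℚ⟦X⟧ × ℚ⟦X⟧ :=
  (aact M.1 M.2.1 M.2.2 N.1, M.2.1 * comp N.2.1 M.2.2, comp N.2.2 M.2.2)

/-- Product in the Riordan group (pairs (g, f)). -/
noncomputable def rmul (M N : ℚ⟦X⟧ × ℚ⟦X⟧) : ℚ⟦X⟧ × ℚ⟦X⟧ :=
  (M.1 * comp N.1 M.2, comp N.2 M.2)
/-- (h(x) - h(0) - h'(0)x)/x^2. -/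
noncomputable def shift2 (f : ℚ⟦X⟧) : ℚ⟦X⟧ := PowerSeries.mk fun n => PowerSeries.coeff (n + 2) f

/-- Action of the second-order almost Riordan array (a, b; g, f) on a power series h. -/
noncomputable def act2 (a b g f h : ℚ⟦X⟧) : ℚ⟦X⟧ :=
  PowerSeries.C (PowerSeries.constantCoeff h) * a +
    PowerSeries.C (PowerSeries.coeff 1 h) * X * b + X ^ 2 * g * comp (shift2 h) f

/-- Product in the group of almost Riordan arrays of second order. -/
noncomputable def amul2 (M N : ℚ⟦X⟧ × ℚ⟦X⟧ × ℚ⟦X⟧ × ℚ⟦X⟧) : ℚ⟦X⟧ × ℚ⟦X⟧ × ℚ⟦X⟧ × ℚ⟦X⟧ :=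
  (act2 M.1 M.2.1 M.2.2.1 M.2.2.2 N.1, aact M.2.1 M.2.2.1 M.2.2.2 N.2.1,
   M.2.2.1 * comp N.2.2.1 M.2.2.2, comp N.2.2.2 M.2.2.2)

-- infrastructure lemmas

lemma coeff_pow_zero {h : ℚ⟦X⟧} (h0 : constantCoeff h = 0) {n k : ℕ} (hk : n < k) :
    coeff n (h ^ k) = 0 := by
  obtain ⟨s, rfl⟩ := X_dvd_iff.mpr h0
  rw [mul_pow, coeff_X_pow_mul', if_neg (not_le.mpr hk)]

lemma coeff_comp (f h : ℚ⟦X⟧) (h0 : constantCoeff h = 0) {n m : ℕ} (hnm : n < m) :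
    coeff n (comp f h) = ∑ k ∈ Finset.range m, coeff k f * coeff n (h ^ k) := by
  rw [comp, coeff_mk]
  apply Finset.sum_subset (Finset.range_subset_range.mpr hnm)
  intro k hk hk'
  rw [Finset.mem_range] at hk'
  rw [coeff_pow_zero h0 (by omega), mul_zero]

lemma coeff_eval₂ {h : ℚ⟦X⟧} (h0 : constantCoeff h = 0) (p : Polynomial ℚ) (n : ℕ) :
    coeff n (Polynomial.eval₂ C h p) =
      ∑ k ∈ Finset.range (n + 1), p.coeff k * coeff n (h ^ k) := by
  have hd : p.natDegree < max (p.natDegree + 1) (n + 1) := lt_of_lt_of_le (Nat.lt_succ_self _) (le_max_left _ _)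
  rw [Polynomial.eval₂_eq_sum_range' C hd h, map_sum]
  have : ∀ k ∈ Finset.range (max (p.natDegree + 1) (n + 1)),
      coeff n (C (p.coeff k) * h ^ k) = p.coeff k * coeff n (h ^ k) := by
    intro k _; rw [coeff_C_mul]
  rw [Finset.sum_congr rfl this]
  symm
  apply Finset.sum_subset (Finset.range_subset_range.mpr (le_max_right _ _))
  intro k hk hk'
  rw [Finset.mem_range] at hk'
  rw [coeff_pow_zero h0 (by omega), mul_zero]

lemma coeff_comp_trunc (f h : ℚ⟦X⟧) (h0 : constantCoeff h = 0) {n m : ℕ} (hnm : n < m) :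
    coeff n (comp f h) = coeff n (Polynomial.eval₂ C h (trunc m f)) := by
  rw [coeff_eval₂ h0, coeff_comp f h h0 (Nat.lt_succ_self n)]
  apply Finset.sum_congr rfl
  intro k hk
  rw [Finset.mem_range] at hk
  rw [coeff_trunc, if_pos (by omega)]

lemma comp_mul (f g h : ℚ⟦X⟧) (h0 : constantCoeff h = 0) :
    comp (f * g) h = comp f h * comp g h := by
  ext n
  rw [coeff_comp_trunc (f*g) h h0 (Nat.lt_succ_self n), coeff_mul]
  have : ∀ p ∈ Finset.HasAntidiagonal.antidiagonal n,
      coeff p.1 (comp f h) * coeff p.2 (comp g h) =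
      coeff p.1 (Polynomial.eval₂ C h (trunc (n+1) f)) *
      coeff p.2 (Polynomial.eval₂ C h (trunc (n+1) g)) := by
    intro p hp
    rw [Finset.HasAntidiagonal.mem_antidiagonal] at hp
    rw [coeff_comp_trunc f h h0 (show p.1 < n+1 by omega),
      coeff_comp_trunc g h h0 (show p.2 < n+1 by omega)]
  rw [Finset.sum_congr rfl this, ← coeff_mul, ← Polynomial.eval₂_mul,
    coeff_eval₂ h0, coeff_eval₂ h0]
  apply Finset.sum_congr rfl
  intro k hk
  rw [Finset.mem_range] at hk
  rw [coeff_trunc, if_pos (by omega),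
    coeff_mul_eq_coeff_trunc_mul_trunc f g (show k < n+1 by omega), ← Polynomial.coe_mul,
    Polynomial.coeff_coe]

lemma comp_C (a : ℚ) (h : ℚ⟦X⟧) : comp (C a) h = C a := by
  ext n
  rw [comp, coeff_mk]
  simp only [coeff_C, ite_mul, zero_mul]
  rw [Finset.sum_ite_eq' (Finset.range (n+1)) 0 (fun k => a * coeff n (h ^ k))]
  simp [coeff_one, coeff_C]

lemma comp_one (h : ℚ⟦X⟧) : comp 1 h = 1 := by
  have := comp_C 1 h
  rwa [map_one] at this

lemma comp_add (f g h : ℚ⟦X⟧) : comp (f + g) h = comp f h + comp g h := by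
  ext n
  simp [comp, add_mul, Finset.sum_add_distrib]

lemma comp_neg (f h : ℚ⟦X⟧) : comp (-f) h = -comp f h := by
  ext n
  simp [comp, Finset.sum_neg_distrib]

lemma comp_sub (f g h : ℚ⟦X⟧) : comp (f - g) h = comp f h - comp g h := by
  rw [sub_eq_add_neg, comp_add, comp_neg, sub_eq_add_neg]

lemma comp_X (h : ℚ⟦X⟧) (h0 : constantCoeff h = 0) : comp X h = h := by
  ext n
  rw [coeff_comp X h h0 (show n < n + 2 by omega)]
  simp only [coeff_X, ite_mul, zero_mul, one_mul]
  rw [Finset.sum_ite_eq' (Finset.range (n+2)) 1 (fun k => coeff n (h ^ k))]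
  simp

-- decompositions
lemma coeff_X2_mul (w : ℚ⟦X⟧) (n : ℕ) :
    coeff n (X ^ 2 * w) = if 2 ≤ n then coeff (n - 2) w else 0 :=
  coeff_X_pow_mul' w 2 n

lemma decomp_constantCoeff (a b : ℚ) (w : ℚ⟦X⟧) :
    constantCoeff (C a + C b * X + X ^ 2 * w) = a := by
  rw [← coeff_zero_eq_constantCoeff_apply]
  simp [coeff_X2_mul, coeff_C]

lemma decomp_coeff_one (a b : ℚ) (w : ℚ⟦X⟧) :
    coeff 1 (C a + C b * X + X ^ 2 * w) = b := by
  simp [coeff_X2_mul, coeff_C, coeff_X]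

lemma shift_decomp (a b : ℚ) (w : ℚ⟦X⟧) :
    shift (C a + C b * X + X ^ 2 * w) = C b + X * w := by
  ext n
  rw [shift, coeff_mk]
  cases n with
  | zero => simp [coeff_X2_mul, coeff_C, coeff_X]
  | succ n =>
    simp only [map_add, coeff_C, coeff_X2_mul, coeff_C_mul, coeff_X, coeff_succ_X_mul]
    have h1 : ¬(n + 1 + 1 = 0) := by omega
    have h2 : ¬(n + 1 + 1 = 1) := by omega
    have h3 : (2 : ℕ) ≤ n + 1 + 1 := by omega
    have h4 : n + 1 + 1 - 2 = n := by omega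
    have h5 : ¬(n + 1 = 0) := by omega
    rw [if_neg h1, if_neg h2, if_pos h3, h4, if_neg h5]
    ring

lemma shift2_decomp (a b : ℚ) (w : ℚ⟦X⟧) :
    shift2 (C a + C b * X + X ^ 2 * w) = w := by
  ext n
  rw [shift2, coeff_mk]
  simp [coeff_X2_mul, coeff_C, coeff_X]

/-- a** = (1, -(1-x)/(1+x); -1/(1+x)^2, x/(1+x)) applied to (1+x)/(1-x) equals (1-x)/(1+x);
consequently ((1+x)/(1-x), (1+x)/(1-x); 1/(1-x)^2, x/(1-x)) is a pseudo-involution in the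
group of almost Riordan arrays of second order, with inverse
((1-x)/(1+x), (1-x)/(1+x); 1/(1+x)^2, x/(1+x)). -/
theorem second_order_pseudo_involution :
    act2 1 (-((1 - X : ℚ⟦X⟧) * (1 + X)⁻¹)) (-((1 + X)⁻¹ ^ 2)) (X * (1 + X)⁻¹)
        ((1 + X) * (1 - X)⁻¹) = (1 - X) * (1 + X)⁻¹ ∧
    amul2 ((1 + X) * (1 - X)⁻¹, (1 + X) * (1 - X)⁻¹, (1 - X)⁻¹ ^ 2, X * (1 - X)⁻¹)
          ((1 - X) * (1 + X)⁻¹, (1 - X) * (1 + X)⁻¹, (1 + X)⁻¹ ^ 2, X * (1 + X)⁻¹)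
      = (1, 1, 1, X) ∧
    amul2 ((1 - X) * (1 + X)⁻¹, (1 - X) * (1 + X)⁻¹, (1 + X)⁻¹ ^ 2, X * (1 + X)⁻¹)
          ((1 + X) * (1 - X)⁻¹, (1 + X) * (1 - X)⁻¹, (1 - X)⁻¹ ^ 2, X * (1 - X)⁻¹)
      = (1, 1, 1, X) := by
  have hcu : constantCoeff (1 + X : ℚ⟦X⟧) ≠ 0 := by simp
  have hcv : constantCoeff (1 - X : ℚ⟦X⟧) ≠ 0 := by simp
  have hu : (1 + X : ℚ⟦X⟧) * (1 + X)⁻¹ = 1 := PowerSeries.mul_inv_cancel _ hcu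
  have hv : (1 - X : ℚ⟦X⟧) * (1 - X)⁻¹ = 1 := PowerSeries.mul_inv_cancel _ hcv
  have h0f : constantCoeff (X * (1 - X)⁻¹ : ℚ⟦X⟧) = 0 := by simp
  have h0f' : constantCoeff (X * (1 + X)⁻¹ : ℚ⟦X⟧) = 0 := by simp
  have e1 : (C 1 : ℚ⟦X⟧) = 1 := by simp
  have e2 : (C 2 : ℚ⟦X⟧) = 2 := by
    rw [show (2 : ℚ) = 1 + 1 by norm_num, map_add, map_one]; norm_num
  have e3 : (C (-2) : ℚ⟦X⟧) = -2 := by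
    rw [show (-2 : ℚ) = -(1 + 1) by norm_num, map_neg, map_add, map_one]; norm_num
  -- comp of units
  have cuf : comp (1 + X) (X * (1 - X)⁻¹) = 1 + X * (1 - X)⁻¹ := by
    rw [comp_add, comp_one, comp_X _ h0f]
  have cvf' : comp (1 - X) (X * (1 + X)⁻¹) = 1 - X * (1 + X)⁻¹ := by
    rw [comp_sub, comp_one, comp_X _ h0f']
  have ne1 : (1 + X * (1 - X)⁻¹ : ℚ⟦X⟧) ≠ 0 := fun hh => by
    simpa using congrArg (constantCoeff) hh
  have ne2 : (1 - X * (1 + X)⁻¹ : ℚ⟦X⟧) ≠ 0 := fun hh => by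
    simpa using congrArg (constantCoeff) hh
  have cUf : comp (1 + X)⁻¹ (X * (1 - X)⁻¹) = 1 - X := by
    have h1 : (1 + X * (1 - X)⁻¹) * comp (1 + X)⁻¹ (X * (1 - X)⁻¹) = 1 := by
      rw [← cuf, ← comp_mul _ _ _ h0f, hu, comp_one]
    have h2 : (1 + X * (1 - X)⁻¹ : ℚ⟦X⟧) * (1 - X) = 1 := by linear_combination X * hv
    exact mul_left_cancel₀ ne1 (h1.trans h2.symm)
  have cVf' : comp (1 - X)⁻¹ (X * (1 + X)⁻¹) = 1 + X := by
    have h1 : (1 - X * (1 + X)⁻¹) * comp (1 - X)⁻¹ (X * (1 + X)⁻¹) = 1 := by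
      rw [← cvf', ← comp_mul _ _ _ h0f', hv, comp_one]
    have h2 : (1 - X * (1 + X)⁻¹ : ℚ⟦X⟧) * (1 + X) = 1 := by linear_combination (-X) * hu
    exact mul_left_cancel₀ ne2 (h1.trans h2.symm)
  -- decompositions
  have dA : (1 + X : ℚ⟦X⟧) * (1 - X)⁻¹ = C 1 + C 2 * X + X ^ 2 * (C 2 * (1 - X)⁻¹) := by
    rw [e1, e2]; linear_combination (1 + 2 * X) * hv
  have dA' : (1 - X : ℚ⟦X⟧) * (1 + X)⁻¹ = C 1 + C (-2) * X + X ^ 2 * (C 2 * (1 + X)⁻¹) := by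
    rw [e1, e2, e3]; linear_combination (1 - 2 * X) * hu
  refine ⟨?_, ?_, ?_⟩
  · -- first claim
    rw [act2, dA, decomp_constantCoeff, decomp_coeff_one, shift2_decomp,
      comp_mul _ _ _ h0f', comp_C, cVf']
    rw [e1, e2]
    linear_combination (-2 * X ^ 2 * (1 + X)⁻¹ - 1) * hu
  · simp only [amul2, Prod.mk.injEq]
    refine ⟨?_, ?_, ?_, ?_⟩
    · rw [act2, dA', decomp_constantCoeff, decomp_coeff_one, shift2_decomp,
        comp_mul _ _ _ h0f, comp_C, cUf]
      rw [e1, e2, e3]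
      linear_combination (2 * X ^ 2 * (1 - X)⁻¹ + 1) * hv
    · rw [aact, dA', decomp_constantCoeff, shift_decomp,
        comp_add, comp_C, comp_mul _ _ _ h0f, comp_X _ h0f,
        comp_mul _ _ _ h0f, comp_C, cUf]
      rw [e1, e2, e3]
      linear_combination (2 * X ^ 2 * (1 - X)⁻¹ ^ 2 - 2 * X * (1 - X)⁻¹ + 1) * hv
    · rw [show ((1 + X)⁻¹ ^ 2 : ℚ⟦X⟧) = (1 + X)⁻¹ * (1 + X)⁻¹ from sq _,
        comp_mul _ _ _ h0f, cUf]
      linear_combination ((1 - X) * (1 - X)⁻¹ + 1) * hv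
    · rw [comp_mul _ _ _ h0f, comp_X _ h0f, cUf]
      linear_combination X * hv
  · simp only [amul2, Prod.mk.injEq]
    refine ⟨?_, ?_, ?_, ?_⟩
    · rw [act2, dA, decomp_constantCoeff, decomp_coeff_one, shift2_decomp,
        comp_mul _ _ _ h0f', comp_C, cVf']
      rw [e1, e2]
      linear_combination (2 * X ^ 2 * (1 + X)⁻¹ + 1) * hu
    · rw [aact, dA, decomp_constantCoeff, shift_decomp,
        comp_add, comp_C, comp_mul _ _ _ h0f', comp_X _ h0f',
        comp_mul _ _ _ h0f', comp_C, cVf']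
      rw [e1, e2]
      linear_combination (2 * X ^ 2 * (1 + X)⁻¹ ^ 2 + 2 * X * (1 + X)⁻¹ + 1) * hu
    · rw [show ((1 - X)⁻¹ ^ 2 : ℚ⟦X⟧) = (1 - X)⁻¹ * (1 - X)⁻¹ from sq _,
        comp_mul _ _ _ h0f', cVf']
      linear_combination ((1 + X) * (1 + X)⁻¹ + 1) * hu
    · rw [comp_mul _ _ _ h0f', comp_X _ h0f', cVf']
      linear_combination X * hu
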